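/- Let F be a field with char F ≠ 2, let n > 2, and let a : Fin n → Fˣ. For c ∈ F define m(c) = #{i : (a i : F) = c} + #{i : ((a i)⁻¹ : F) = c} + (1 if c = 1, else 0). Then the following are equivalent: (i) for all i ≠ j one has a i ≠ a j and (a i)·(a j) ≠ 1, and a i ≠ 1 for all i; (ii) m(−1) ≤ 2 and m(c) ≤ 1 for every c ∈ F with c ≠ −1. -/

import Mathlib

open scoped Classical in
/-- **Lemma 2.11(2), case `G = B_n`.** Let `char F ≠ 2` and `n > 2`. A semisimple element
with eigenvalues `a 1, …, a n, (a 1)⁻¹, …, (a n)⁻¹, 1` on the natural `(2n+1)`-dimensional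
module of `B_n` (eigenvalue multiplicities given by `m`) is regular (condition (i)) if and
only if the eigenvalue `-1` has multiplicity at most `2` and all other eigenvalues have
multiplicity `1` (condition (ii)). -/
theorem regular_iff_mult_Bn
    {F : Type*} [Field F] (hF : ringChar F ≠ 2) {n : ℕ} (hn : 2 < n)
    (a : Fin n → Fˣ)
    (m : F → ℕ)
    (hm : ∀ c : F, m c =
      (Finset.univ.filter (fun i => (a i : F) = c)).card +
      (Finset.univ.filter (fun i => (((a i)⁻¹ : Fˣ) : F) = c)).card +
      (if c = 1 then 1 else 0)) :
    ((∀ i j, i ≠ j → a i ≠ a j ∧ a i * a j ≠ 1) ∧ (∀ i, a i ≠ 1)) ↔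
      (m (-1) ≤ 2 ∧ ∀ c : F, c ≠ -1 → m c ≤ 1) := by
  have hneg1 : (-1 : F) ≠ 1 := Ring.neg_one_ne_one_of_char_ne_two hF
  constructor
  · rintro ⟨hpair, hne1⟩
    have hA : ∀ c : F, (Finset.univ.filter (fun i => (a i : F) = c)).card ≤ 1 := by
      intro c
      apply Finset.card_le_one.2
      intro i hi j hj
      simp only [Finset.mem_filter] at hi hj
      by_contra hij
      exact (hpair i j hij).1 (Units.ext (hi.2.trans hj.2.symm))
    have hB : ∀ c : F, (Finset.univ.filter (fun i => (((a i)⁻¹ : Fˣ) : F) = c)).card ≤ 1 := by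
      intro c
      apply Finset.card_le_one.2
      intro i hi j hj
      simp only [Finset.mem_filter] at hi hj
      by_contra hij
      exact (hpair i j hij).1 (inv_injective (Units.ext (hi.2.trans hj.2.symm)))
    constructor
    · rw [hm, if_neg hneg1]
      have h1 := hA (-1); have h2 := hB (-1); omega
    · intro c hc
      rw [hm]
      by_cases hc1 : c = 1
      · subst hc1
        have hA0 : (Finset.univ.filter (fun i => (a i : F) = 1)).card = 0 := by
          rw [Finset.card_eq_zero, Finset.filter_eq_empty_iff]
          intro i _ h
          exact hne1 i (Units.ext (by simpa using h))
        have hB0 : (Finset.univ.filter (fun i => (((a i)⁻¹ : Fˣ) : F) = 1)).card = 0 := by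
          rw [Finset.card_eq_zero, Finset.filter_eq_empty_iff]
          intro i _ h
          exact hne1 i (by simpa using inv_eq_one.1 (Units.ext (by simpa using h)))
        rw [hA0, hB0, if_pos rfl]
      · rw [if_neg hc1]
        by_contra hcon
        push_neg at hcon
        have hA' := hA c
        have hB' := hB c
        have hA1 : 0 < (Finset.univ.filter (fun i => (a i : F) = c)).card := by omega
        have hB1 : 0 < (Finset.univ.filter (fun i => (((a i)⁻¹ : Fˣ) : F) = c)).card := by omega
        obtain ⟨i, hi⟩ := Finset.card_pos.1 hA1
        obtain ⟨j, hj⟩ := Finset.card_pos.1 hB1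
        simp only [Finset.mem_filter] at hi hj
        by_cases hij : i = j
        · subst hij
          have key : c * c = (a i : F) * (((a i)⁻¹ : Fˣ) : F) := by rw [hi.2, hj.2]
          have : c * c = 1 := by rw [key]; exact Units.mul_inv (a i)
          rcases mul_self_eq_one_iff.1 this with h | h
          · exact hc1 h
          · exact hc h
        · have heq : a i = (a j)⁻¹ := Units.ext (hi.2.trans hj.2.symm)
          apply (hpair i j hij).2
          rw [heq, inv_mul_cancel]
  · rintro ⟨hneg, hrest⟩
    have hone : (1 : F) ≠ -1 := fun h => hneg1 h.symm
    have hne1 : ∀ i, a i ≠ 1 := by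
      intro i hi
      have h1 : i ∈ Finset.univ.filter (fun i => (a i : F) = 1) := by
        simp [hi]
      have h2 : i ∈ Finset.univ.filter (fun i => (((a i)⁻¹ : Fˣ) : F) = 1) := by
        simp [hi]
      have hc1 := Finset.card_pos.2 ⟨i, h1⟩
      have hc2 := Finset.card_pos.2 ⟨i, h2⟩
      have := hrest 1 hone
      rw [hm, if_pos rfl] at this
      omega
    refine ⟨fun i j hij => ⟨?_, ?_⟩, hne1⟩
    · intro heq
      by_cases hc : (a i : F) = -1
      · have hci : i ∈ Finset.univ.filter (fun k => (a k : F) = (-1 : F)) := by rw [Finset.mem_filter]; exact ⟨Finset.mem_univ _, hc⟩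
        have hcj : j ∈ Finset.univ.filter (fun k => (a k : F) = (-1 : F)) := by
          rw [Finset.mem_filter]; exact ⟨Finset.mem_univ _, by rw [← heq]; exact hc⟩
        have hinv : ((a i)⁻¹ : Fˣ) = a i := by
          have : a i * a i = 1 := Units.ext (by push_cast [hc]; ring)
          rw [inv_eq_iff_mul_eq_one, this]
        have hdi : i ∈ Finset.univ.filter (fun k => (((a k)⁻¹ : Fˣ) : F) = (-1 : F)) := by
          rw [Finset.mem_filter]
          exact ⟨Finset.mem_univ _, by rw [hinv]; exact hc⟩
        have hdj : j ∈ Finset.univ.filter (fun k => (((a k)⁻¹ : Fˣ) : F) = (-1 : F)) := by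
          have hjinv : ((a j)⁻¹ : Fˣ) = a j := by rw [← heq]; exact hinv
          rw [Finset.mem_filter]
          exact ⟨Finset.mem_univ _, by rw [hjinv, ← heq]; exact hc⟩
        have h1 : 1 < (Finset.univ.filter (fun k => (a k : F) = (-1 : F))).card :=
          Finset.one_lt_card.2 ⟨i, hci, j, hcj, hij⟩
        have h2 : 1 < (Finset.univ.filter (fun k => (((a k)⁻¹ : Fˣ) : F) = (-1 : F))).card :=
          Finset.one_lt_card.2 ⟨i, hdi, j, hdj, hij⟩
        have := hneg
        rw [hm] at this
        omega
      · have hci : i ∈ Finset.univ.filter (fun k => (a k : F) = (a i : F)) := by simp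
        have hcj : j ∈ Finset.univ.filter (fun k => (a k : F) = (a i : F)) := by
          simp [← heq]
        have h1 : 1 < (Finset.univ.filter (fun k => (a k : F) = (a i : F))).card :=
          Finset.one_lt_card.2 ⟨i, hci, j, hcj, hij⟩
        have := hrest (a i : F) hc
        rw [hm] at this
        omega
    · intro hmul
      have hji : a j = (a i)⁻¹ := by
        rw [eq_inv_iff_mul_eq_one, mul_comm]; exact hmul
      by_cases hc : (a i : F) = -1
      · have hii : ((a i)⁻¹ : Fˣ) = a i := by
          have : a i * a i = 1 := Units.ext (by push_cast [hc]; ring)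
          rw [inv_eq_iff_mul_eq_one, this]
        have hajc : (a j : F) = -1 := by rw [hji, hii, hc]
        have hci : i ∈ Finset.univ.filter (fun k => (a k : F) = (-1 : F)) := by rw [Finset.mem_filter]; exact ⟨Finset.mem_univ _, hc⟩
        have hcj : j ∈ Finset.univ.filter (fun k => (a k : F) = (-1 : F)) := by rw [Finset.mem_filter]; exact ⟨Finset.mem_univ _, hajc⟩
        have hdi : i ∈ Finset.univ.filter (fun k => (((a k)⁻¹ : Fˣ) : F) = (-1 : F)) := by
          rw [Finset.mem_filter]
          exact ⟨Finset.mem_univ _, by rw [hii]; exact hc⟩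
        have hdj : j ∈ Finset.univ.filter (fun k => (((a k)⁻¹ : Fˣ) : F) = (-1 : F)) := by
          have hjinv : ((a j)⁻¹ : Fˣ) = a j := by rw [hji, hii]; exact hii
          rw [Finset.mem_filter]
          exact ⟨Finset.mem_univ _, by rw [hjinv]; exact hajc⟩
        have h1 : 1 < (Finset.univ.filter (fun k => (a k : F) = (-1 : F))).card :=
          Finset.one_lt_card.2 ⟨i, hci, j, hcj, hij⟩
        have h2 : 1 < (Finset.univ.filter (fun k => (((a k)⁻¹ : Fˣ) : F) = (-1 : F))).card :=
          Finset.one_lt_card.2 ⟨i, hdi, j, hdj, hij⟩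
        have := hneg
        rw [hm] at this
        omega
      · have hci : i ∈ Finset.univ.filter (fun k => (a k : F) = (a i : F)) := by simp
        have hdj : j ∈ Finset.univ.filter (fun k => (((a k)⁻¹ : Fˣ) : F) = (a i : F)) := by
          simp [hji]
        have h1 : 0 < (Finset.univ.filter (fun k => (a k : F) = (a i : F))).card :=
          Finset.card_pos.2 ⟨i, hci⟩
        have h2 : 0 < (Finset.univ.filter (fun k => (((a k)⁻¹ : Fˣ) : F) = (a i : F))).card :=
          Finset.card_pos.2 ⟨j, hdj⟩
        have := hrest (a i : F) hc
        rw [hm] at this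
        omega
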